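/- Let p be an odd prime with p ≡ 3 (mod 8) or p ≡ 5 (mod 8) (equivalently, p ≢ ±1 (mod 8)). Then the equation x^4 + y^4 = z^p has no solutions in the First Case; that is, for all integers x, y, z with gcd(x, y) = 1 and x^4 + y^4 = z^p, one has p ∣ x·y. -/

import Mathlib

open Zsqrtd

local notation "ℤi" => GaussianInt

private lemma odd_sq_mod8' {m : ℤ} (hm : Odd m) : (8:ℤ) ∣ m^2 - 1 := by
  obtain ⟨k, rfl⟩ := hm
  obtain ⟨j, hj⟩ := Int.even_mul_succ_self k
  exact ⟨j, by linear_combination 4 * hj⟩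

private lemma odd_pow4_mod16' {x : ℤ} (hx : Odd x) : (16:ℤ) ∣ x^4 - 1 := by
  obtain ⟨k, rfl⟩ := hx
  obtain ⟨j, hj⟩ := Int.even_mul_succ_self k
  exact ⟨j * (2*k^2+2*k+1), by linear_combination (8*(2*k^2+2*k+1)) * hj⟩

private lemma gauss_pow_parity (a b : ℤ) (ha : Even a) (hb : ¬ Even b) (n : ℕ) :
    (Even n → ¬ Even ((⟨a, b⟩ : ℤi) ^ n).re ∧ Even ((⟨a, b⟩ : ℤi) ^ n).im) ∧
    (¬ Even n → Even ((⟨a, b⟩ : ℤi) ^ n).re ∧ ¬ Even ((⟨a, b⟩ : ℤi) ^ n).im) := by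
  induction n with
  | zero =>
      refine ⟨fun _ => ⟨?_, ?_⟩, fun h => absurd (by simp : Even 0) h⟩ <;> simp
  | succ n ih =>
      have hre : ((⟨a, b⟩ : ℤi) ^ (n+1)).re
          = ((⟨a, b⟩ : ℤi) ^ n).re * a + -1 * ((⟨a, b⟩ : ℤi) ^ n).im * b := by
        rw [pow_succ]; exact Zsqrtd.re_mul _ _
      have him : ((⟨a, b⟩ : ℤi) ^ (n+1)).im
          = ((⟨a, b⟩ : ℤi) ^ n).re * b + ((⟨a, b⟩ : ℤi) ^ n).im * a := by
        rw [pow_succ]; exact Zsqrtd.im_mul _ _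
      rcases Nat.even_or_odd n with he | ho
      · obtain ⟨h1, h2⟩ := ih.1 he
        have hn1 : ¬ Even (n+1) := by simp [Nat.even_add_one, he]
        refine ⟨fun h => absurd h hn1, fun _ => ⟨?_, ?_⟩⟩
        · rw [hre]; simp only [Int.even_add, Int.even_mul, even_neg]; norm_num; tauto
        · rw [him]; simp only [Int.even_add, Int.even_mul, even_neg]; norm_num; tauto
      · have ho' : ¬ Even n := Nat.not_even_iff_odd.mpr ho
        obtain ⟨h1, h2⟩ := ih.2 ho'
        have hn1 : Even (n+1) := by simpa [Nat.even_add_one] using ho'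
        refine ⟨fun _ => ⟨?_, ?_⟩, fun h => absurd hn1 h⟩
        · rw [hre]; simp only [Int.even_add, Int.even_mul, even_neg]; norm_num; tauto
        · rw [him]; simp only [Int.even_add, Int.even_mul, even_neg]; norm_num; tauto

private lemma gauss_pow_re_im (a b : ℤ) (n : ℕ) : ∃ u v : ℤ,
    ((⟨a, b⟩ : ℤi) ^ (n+1)).re = a^(n+1) + b^2*u ∧
    ((⟨a, b⟩ : ℤi) ^ (n+1)).im = (n+1)*a^n*b + b^3*v := by
  induction n with
  | zero => exact ⟨0, 0, by simp, by simp⟩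
  | succ n ih =>
      obtain ⟨u, v, hre, him⟩ := ih
      have hre' : ((⟨a, b⟩ : ℤi) ^ (n+2)).re
          = ((⟨a, b⟩ : ℤi) ^ (n+1)).re * a + -1 * ((⟨a, b⟩ : ℤi) ^ (n+1)).im * b := by
        rw [pow_succ]; exact Zsqrtd.re_mul _ _
      have him' : ((⟨a, b⟩ : ℤi) ^ (n+2)).im
          = ((⟨a, b⟩ : ℤi) ^ (n+1)).re * b + ((⟨a, b⟩ : ℤi) ^ (n+1)).im * a := by
        rw [pow_succ]; exact Zsqrtd.im_mul _ _
      refine ⟨a*u - (n+1)*a^n - b^2*v, u + a*v, ?_, ?_⟩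
      · rw [hre', hre, him]; push_cast; ring
      · rw [him', hre, him]; push_cast; ring

private lemma gauss_unit_pow_four (u : ℤi) (h : IsUnit u) : u^4 = 1 := by
  have h1 : u.norm.natAbs = 1 := Zsqrtd.norm_eq_one_iff.2 h
  obtain ⟨r, m⟩ := u
  have h2 : (Zsqrtd.norm (⟨r, m⟩ : ℤi)) = r^2 + m^2 := by
    rw [Zsqrtd.norm_def]; ring
  have h3 : r^2 + m^2 = 1 := by
    have h4 : (Zsqrtd.norm (⟨r, m⟩ : ℤi)) = 1 := by
      have := Zsqrtd.norm_nonneg (by norm_num : (-1:ℤ) ≤ 0) (⟨r, m⟩ : ℤi)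
      omega
    rw [h2] at h4; exact h4
  have hr1 : r ≤ 1 := by nlinarith [sq_nonneg m]
  have hr2 : -1 ≤ r := by nlinarith [sq_nonneg m]
  have hm1 : m ≤ 1 := by nlinarith [sq_nonneg r]
  have hm2 : -1 ≤ m := by nlinarith [sq_nonneg r]
  interval_cases r <;> interval_cases m <;>
    first
      | (exfalso; omega)
      | (apply Zsqrtd.ext <;>
          simp [pow_succ, Zsqrtd.re_mul, Zsqrtd.im_mul])

private lemma main_aux (p : ℕ) (hp : p.Prime) (hp8 : p % 8 = 3 ∨ p % 8 = 5)
    (x y z : ℤ) (hgcd : Int.gcd x y = 1) (heq : x ^ 4 + y ^ 4 = z ^ p)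
    (hpx : ¬ (p:ℤ) ∣ x) (hpy : ¬ (p:ℤ) ∣ y) (hy2 : (2:ℤ) ∣ y) : False := by
  have hp3 : 3 ≤ p := by rcases hp8 with h | h <;> omega
  have hppos : p ≠ 0 := by omega
  have hpodd : Odd p := Nat.odd_iff.mpr (by omega)
  -- x is odd
  have hxodd : Odd x := by
    rcases Int.even_or_odd x with hxe | hxo
    · exfalso
      have h2g : (2:ℤ) ∣ (Int.gcd x y : ℤ) :=
        Int.dvd_coe_gcd (even_iff_two_dvd.mp hxe) hy2
      rw [hgcd] at h2g
      norm_num at h2g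
    · exact hxo
  have hyeven : Even y := even_iff_two_dvd.mpr hy2
  -- z is odd
  have hzpodd : Odd (z ^ p) := by
    rw [← heq]
    exact (hxodd.pow).add_even (Int.even_pow.mpr ⟨hyeven, by norm_num⟩)
  have hzodd : Odd z := by
    rcases Int.even_or_odd z with hze | hzo
    · exact absurd hzpodd (Int.not_odd_iff_even.mpr (Int.even_pow.mpr ⟨hze, hppos⟩))
    · exact hzo
  -- coprimality data
  have hcop : IsCoprime x y := Int.isCoprime_iff_gcd_eq_one.mpr hgcd
  obtain ⟨s, t, hst⟩ := (hcop.pow (m := 4) (n := 4))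
  -- the Gaussian integer A
  set A : ℤi := ⟨x^2, y^2⟩ with hA
  have hnormA : A.norm = z ^ p := by
    rw [Zsqrtd.norm_def]
    push_cast
    linear_combination heq
  have hAmul : A * star A = (z : ℤi) ^ p := by
    rw [← Zsqrtd.norm_eq_mul_conj, hnormA]
    push_cast
    ring
  -- A and star A are coprime
  have hAcop : IsCoprime A (star A) := by
    apply isCoprime_of_irreducible_dvd
    · rintro ⟨h1, -⟩
      have : x^2 = 0 := congrArg Zsqrtd.re h1
      exact hpx (by simp [pow_eq_zero_iff] at this; simp [this])
    · intro q hq hqA hqsA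
      apply hq.not_isUnit
      have h2x : q ∣ ((2*x^2 : ℤ) : ℤi) := by
        have h1 : A + star A = ((2*x^2 : ℤ) : ℤi) := by
          apply Zsqrtd.ext <;>
            simp only [hA, Zsqrtd.star_mk, Zsqrtd.re_add, Zsqrtd.im_add,
              Zsqrtd.re_intCast, Zsqrtd.im_intCast] <;> ring
        rw [← h1]; exact dvd_add hqA hqsA
      have h2y : q ∣ ((2*y^2 : ℤ) : ℤi) := by
        have h1 : (⟨0, -1⟩ : ℤi) * (A - star A) = ((2*y^2 : ℤ) : ℤi) := by
          apply Zsqrtd.ext <;>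
            simp only [hA, Zsqrtd.star_mk, Zsqrtd.re_mul, Zsqrtd.im_mul,
              Zsqrtd.re_sub, Zsqrtd.im_sub, Zsqrtd.re_intCast, Zsqrtd.im_intCast] <;> ring
        rw [← h1]
        exact Dvd.dvd.mul_left (dvd_sub hqA hqsA) _
      have h2 : q ∣ ((2 : ℤ) : ℤi) := by
        have hZ : (s*x^2)*(2*x^2) + (t*y^2)*(2*y^2) = (2:ℤ) := by
          linear_combination 2*hst
        have : ((2:ℤ) : ℤi) = ((s*x^2 : ℤ) : ℤi) * ((2*x^2 : ℤ) : ℤi)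
            + ((t*y^2 : ℤ) : ℤi) * ((2*y^2 : ℤ) : ℤi) := by
          rw [← Int.cast_mul, ← Int.cast_mul, ← Int.cast_add, hZ]
        rw [this]
        exact dvd_add (h2x.mul_left _) (h2y.mul_left _)
      -- norms
      obtain ⟨w1, hw1⟩ := h2
      have hnq4 : q.norm ∣ 4 := by
        refine ⟨w1.norm, ?_⟩
        have := congrArg Zsqrtd.norm hw1
        rwa [Zsqrtd.norm_mul, Zsqrtd.norm_intCast] at this <;> norm_num at this ⊢
      obtain ⟨w2, hw2⟩ := hqA
      have hnqz : q.norm ∣ z ^ p := by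
        refine ⟨w2.norm, ?_⟩
        have := congrArg Zsqrtd.norm hw2
        rwa [Zsqrtd.norm_mul, hnormA] at this
      have hcz : IsCoprime (4 : ℤ) (z ^ p) := by
        have h2z : IsCoprime (2 : ℤ) z :=
          (Int.prime_two.coprime_iff_not_dvd).mpr
            (fun h => (Int.not_odd_iff_even.mpr (even_iff_two_dvd.mpr h)) hzodd)
        have := (h2z.pow (m := 2) (n := p))
        norm_num at this
        exact this
      have : IsUnit q.norm := hcz.isUnit_of_dvd' hnq4 hnqz
      exact Zsqrtd.norm_eq_one_iff.mp (Int.isUnit_iff_natAbs_eq.mp this)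
  -- extract p-th power
  obtain ⟨b0, u0, hu0⟩ := exists_associated_pow_of_mul_eq_pow' hAcop hAmul
  have hu4 : (u0 : ℤi)^4 = 1 := gauss_unit_pow_four _ u0.isUnit
  obtain ⟨m, hm⟩ : ∃ m, p^2 = 4*m+1 := by
    obtain ⟨k, hk⟩ := hpodd
    exact ⟨k*k+k, by subst hk; ring⟩
  set β : ℤi := b0 * (u0 : ℤi)^p with hβdef
  have hβ : β ^ p = A := by
    have h1 : β ^ p = b0 ^ p * ((u0 : ℤi)^(p^2)) := by
      rw [hβdef, mul_pow, ← pow_mul, pow_two]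
    rw [h1, hm, pow_succ, pow_mul, hu4, one_pow, one_mul, hu0]
  set a := β.re with hadef
  set b := β.im with hbdef
  have hβmk : (⟨a, b⟩ : ℤi) = β := rfl
  have hx2 : ((⟨a, b⟩ : ℤi) ^ p).re = x^2 := by rw [hβmk, hβ, hA]
  have hy2im : ((⟨a, b⟩ : ℤi) ^ p).im = y^2 := by rw [hβmk, hβ, hA]
  -- norm of β
  have hnormβ : (a^2+b^2)^p = z^p := by
    have h1 : ∀ n : ℕ, Zsqrtd.norm (β ^ n) = (Zsqrtd.norm β)^n := by
      intro n
      induction n with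
      | zero => simp
      | succ n ih => rw [pow_succ, Zsqrtd.norm_mul, ih, pow_succ]
    have h1 := h1 p
    have h2 : Zsqrtd.norm β = a^2+b^2 := by rw [Zsqrtd.norm_def]; ring
    rw [← h2, ← h1, hβ, hnormA]
  have hsumodd : Odd (a^2+b^2) := by
    have h1 : Odd ((a^2+b^2)^p) := hnormβ ▸ hzpodd
    rcases Int.odd_pow.mp h1 with h | h
    · exact h
    · omega
  -- a odd, b even
  have hab : Odd a ∧ Even b := by
    rcases Int.even_or_odd a with hae | hao
    · exfalso
      have hbodd : ¬ Even b := by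
        intro hbe
        have : Even (a^2+b^2) :=
          (Int.even_pow.mpr ⟨hae, two_ne_zero⟩).add (Int.even_pow.mpr ⟨hbe, two_ne_zero⟩)
        exact (Int.not_odd_iff_even.mpr this) hsumodd
      have hcontra := ((gauss_pow_parity a b hae hbodd p).2
        (Nat.not_even_iff_odd.mpr hpodd)).2
      rw [hy2im] at hcontra
      exact hcontra (Int.even_pow.mpr ⟨hyeven, two_ne_zero⟩)
    · rcases Int.even_or_odd b with hbe | hbo
      · exact ⟨hao, hbe⟩
      · exfalso
        have : Even (a^2+b^2) := (hao.pow).add_odd (hbo.pow)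
        exact (Int.not_odd_iff_even.mpr this) hsumodd
  obtain ⟨haodd, hbeven⟩ := hab
  -- expansion of re and im
  obtain ⟨U, V, hreE, himE⟩ := gauss_pow_re_im a b (p-1)
  have hp1 : p - 1 + 1 = p := Nat.succ_pred_eq_of_pos hp.pos
  rw [hp1] at hreE himE
  have hcoef : ((p-1 : ℕ) : ℤ) + 1 = (p : ℤ) := by omega
  rw [hcoef] at himE
  set T : ℤ := (p:ℤ)*a^(p-1) + b^2*V with hTdef
  have hyT : y^2 = b*T := by rw [← hy2im, himE, hTdef]; ring
  have hx2' : x^2 = a^p + b^2*U := by rw [← hx2, hreE]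
  have hTodd : Odd T := by
    have h1 : Odd ((p:ℤ)*a^(p-1)) := (Int.odd_coe_nat p |>.mpr hpodd).mul (haodd.pow)
    have h2 : Even (b^2*V) := (Int.even_pow.mpr ⟨hbeven, two_ne_zero⟩).mul_right V
    exact h1.add_even h2
  -- b and T are coprime
  have hbT : IsCoprime b T := by
    rw [Int.isCoprime_iff_gcd_eq_one]
    by_contra hne
    obtain ⟨q, hq, hqg⟩ := Nat.exists_prime_and_dvd hne
    have hqb : (q:ℤ) ∣ b := dvd_trans (Int.natCast_dvd_natCast.mpr hqg) (Int.gcd_dvd_left _ _)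
    have hqT : (q:ℤ) ∣ T := dvd_trans (Int.natCast_dvd_natCast.mpr hqg) (Int.gcd_dvd_right _ _)
    have hqprime : Prime (q:ℤ) := Nat.prime_iff_prime_int.mp hq
    have hqpa : (q:ℤ) ∣ (p:ℤ)*a^(p-1) := by
      have h1 : (p:ℤ)*a^(p-1) = T - b^2*V := by rw [hTdef]; ring
      rw [h1]
      exact dvd_sub hqT ((dvd_pow hqb two_ne_zero).mul_right V)
    have hqy : (q:ℤ) ∣ y := by
      have h1 : (q:ℤ) ∣ y^2 := by rw [hyT]; exact hqb.mul_right T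
      exact hqprime.dvd_of_dvd_pow h1
    rcases hqprime.dvd_mul.mp hqpa with h | h
    · have hqp' : q = p := (Nat.prime_dvd_prime_iff_eq hq hp).mp (Int.natCast_dvd_natCast.mp h)
      subst hqp'
      exact hpy hqy
    · have hqa : (q:ℤ) ∣ a := hqprime.dvd_of_dvd_pow h
      have hqx : (q:ℤ) ∣ x := by
        have h1 : (q:ℤ) ∣ x^2 := by
          rw [hx2']
          exact dvd_add (dvd_pow hqa hppos) ((dvd_pow hqb two_ne_zero).mul_right U)
        exact hqprime.dvd_of_dvd_pow h1
      have h1 : (q:ℤ) ∣ ((1:ℕ):ℤ) := by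
        rw [← hgcd]; exact Int.dvd_coe_gcd hqx hqy
      have : q ∣ 1 := Int.natCast_dvd_natCast.mp h1
      exact hq.one_lt.ne' (Nat.dvd_one.mp this)
  -- b is plus or minus a square
  obtain ⟨w, hw⟩ := Int.sq_of_isCoprime hbT hyT.symm
  have hyne : y ≠ 0 := fun h => hpy (by simp [h])
  have hbne : b ≠ 0 := by
    intro hb0
    apply hyne
    have h1 : y^2 = 0 := by rw [hyT, hb0, zero_mul]
    exact pow_eq_zero_iff two_ne_zero |>.mp h1
  have hwne : w ≠ 0 := by
    rintro rfl
    rcases hw with h | h <;> simp at h <;> exact hbne h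
  -- 4 divides b
  have h4b : (4:ℤ) ∣ b := by
    have hweven : Even w := by
      rcases hw with h | h
      · have h1 : Even (w^2) := h ▸ hbeven
        exact (Int.even_pow.mp h1).1
      · have h1 : Even (w^2) := by
          have h2 : Even (-(w^2)) := by rw [← h]; exact hbeven
          simpa using h2
        exact (Int.even_pow.mp h1).1
    obtain ⟨c, hc⟩ := hweven
    rcases hw with h | h
    · exact ⟨c^2, by rw [h, hc]; ring⟩
    · exact ⟨-(c^2), by rw [h, hc]; ring⟩
  -- 8 ∣ T - p
  have h8ap : (8:ℤ) ∣ a^(p-1) - 1 := by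
    obtain ⟨e, he⟩ : ∃ e, p - 1 = e*2 := ⟨(p-1)/2, by omega⟩
    rw [he, pow_mul]
    exact odd_sq_mod8' (haodd.pow)
  have h8T : (8:ℤ) ∣ T - (p:ℤ) := by
    have h16 : (8:ℤ) ∣ b^2*V := by
      obtain ⟨c, hc⟩ := h4b
      exact ⟨2*c^2*V, by rw [hc]; ring⟩
    have h1 : T - (p:ℤ) = (p:ℤ)*(a^(p-1) - 1) + b^2*V := by rw [hTdef]; ring
    rw [h1]
    exact dvd_add (Dvd.dvd.mul_left h8ap _) h16
  -- w divides y, cofactor square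
  have hw2dvd : w^2 ∣ y^2 := by
    rcases hw with h | h
    · rw [hyT, h]; exact Dvd.dvd.mul_right dvd_rfl T
    · rw [hyT, h]; exact ⟨-T, by ring⟩
  obtain ⟨c, hc⟩ := (Int.pow_dvd_pow_iff two_ne_zero).mp hw2dvd
  have hw2ne : w^2 ≠ 0 := pow_ne_zero _ hwne
  have hTc : T = c^2 ∨ T = -c^2 := by
    rcases hw with h | h
    · left
      have h1 : w^2*T = w^2*c^2 := by linear_combination -hyT - T*h + (y + w*c)*hc
      exact mul_left_cancel₀ hw2ne h1
    · right
      have h1 : w^2*T = w^2*(-c^2) := by linear_combination hyT + T*h - (y + w*c)*hc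
      exact mul_left_cancel₀ hw2ne h1
  have hcodd : Odd c := by
    have h1 : Odd (c^2) := by
      rcases hTc with h | h
      · exact h ▸ hTodd
      · have h2 : Odd (-(c^2)) := h ▸ hTodd
        exact odd_neg.mp h2
    rcases Int.odd_pow.mp h1 with h | h
    · exact h
    · omega
  have h8c : (8:ℤ) ∣ c^2 - 1 := odd_sq_mod8' hcodd
  rcases hTc with h | h
  · have hdvd : (8:ℤ) ∣ (p:ℤ) - 1 := by
      have h2 : (p:ℤ) - 1 = (c^2-1) - (T - p) := by rw [h]; ring
      rw [h2]
      exact dvd_sub h8c h8T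
    obtain ⟨k, hk⟩ := hdvd
    omega
  · have hdvd : (8:ℤ) ∣ (p:ℤ) + 1 := by
      have h2 : (p:ℤ) + 1 = -(T - (p:ℤ)) - (c^2 - 1) := by rw [h]; ring
      rw [h2]
      exact dvd_sub (dvd_neg.mpr h8T) h8c
    obtain ⟨k, hk⟩ := hdvd
    omega

theorem fermat_quartic_first_case_three_five_mod_eight (p : ℕ) (hp : p.Prime)
    (hp8 : p % 8 = 3 ∨ p % 8 = 5) :
    ∀ x y z : ℤ, Int.gcd x y = 1 → x ^ 4 + y ^ 4 = z ^ p → (p : ℤ) ∣ x * y := by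
  intro x y z hgcd heq
  by_contra hndvd
  have hpx : ¬ (p:ℤ) ∣ x := fun h => hndvd (h.mul_right y)
  have hpy : ¬ (p:ℤ) ∣ y := fun h => hndvd (h.mul_left x)
  rcases Int.even_or_odd y with hye | hyo
  · exact main_aux p hp hp8 x y z hgcd heq hpx hpy (even_iff_two_dvd.mp hye)
  · rcases Int.even_or_odd x with hxe | hxo
    · refine main_aux p hp hp8 y x z ?_ ?_ hpy hpx (even_iff_two_dvd.mp hxe)
      · rw [Int.gcd_comm]; exact hgcd
      · rw [add_comm]; exact heq
    · -- both odd : impossible mod 16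
      have hp3 : 3 ≤ p := by rcases hp8 with h | h <;> omega
      obtain ⟨k, hk⟩ := odd_pow4_mod16' hxo
      obtain ⟨l, hl⟩ := odd_pow4_mod16' hyo
      have hzp : z ^ p = 16*k + 16*l + 2 := by omega
      have h2z : (2:ℤ) ∣ z := by
        apply Int.prime_two.dvd_of_dvd_pow (n := p)
        exact ⟨8*k + 8*l + 1, by omega⟩
      obtain ⟨z', rfl⟩ := h2z
      have h8 : (8:ℤ) ∣ (2*z')^p := by
        have h1 : (2:ℤ)^p ∣ (2*z')^p := pow_dvd_pow_of_dvd (dvd_mul_right 2 z') p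
        have h2 : (8:ℤ) ∣ 2^p := by
          have : (2:ℤ)^3 ∣ 2^p := pow_dvd_pow 2 hp3
          norm_num at this
          exact this
        exact h2.trans h1
      obtain ⟨m8, hm8⟩ := h8
      omega
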